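/- Every weakly Hausdorff topological space is k₂-Hausdorff; that is, if for every compact Hausdorff space K and continuous map f : K → X the image f[K] is closed in X, then the diagonal Δ_X = {(x,x) : x ∈ X} is k₂-closed in the product space X × X. -/

import Mathlib

open Set Filter Topology

universe u

/-- A subset `C` of a space `X` is k₁-closed provided for every compact subset `K` of `X`,
the intersection `C ∩ K` is closed in the subspace topology on `K`. -/
def IsK1Closed {X : Type u} [TopologicalSpace X] (C : Set X) : Prop :=
  ∀ K : Set X, IsCompact K → IsClosed ((Subtype.val : K → X) ⁻¹' C)

/-- A space is k₁-Hausdorff provided its diagonal is k₁-closed in its square. -/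
def K1Hausdorff (X : Type u) [TopologicalSpace X] : Prop :=
  IsK1Closed {p : X × X | p.1 = p.2}

/-- A space is KC provided every compact subset is closed. -/
def KCSpace (X : Type u) [TopologicalSpace X] : Prop :=
  ∀ K : Set X, IsCompact K → IsClosed K

/-- A space `X` is weakly Hausdorff provided for every compact Hausdorff space `K` and
continuous `f : K → X`, the image of `f` is closed in `X`. -/
def WeaklyHausdorff (X : Type u) [TopologicalSpace X] : Prop :=
  ∀ (K : Type u) [TopologicalSpace K] [CompactSpace K] [T2Space K]
    (f : K → X), Continuous f → IsClosed (Set.range f)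

/-- A subset `C` of `X` is k₂-closed provided for every compact Hausdorff space `K` and
continuous `f : K → X`, the preimage `f ⁻¹' C` is closed in `K`. -/
def IsK2Closed {X : Type u} [TopologicalSpace X] (C : Set X) : Prop :=
  ∀ (K : Type u) [TopologicalSpace K] [CompactSpace K] [T2Space K]
    (f : K → X), Continuous f → IsClosed (f ⁻¹' C)

/-- A space is k₂-Hausdorff provided its diagonal is k₂-closed in its square. -/
def K2Hausdorff (X : Type u) [TopologicalSpace X] : Prop :=
  IsK2Closed {p : X × X | p.1 = p.2}

/-- A space has unique sequential limits provided every convergent sequence has a unique limit. -/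
def UniqueSequentialLimits (X : Type u) [TopologicalSpace X] : Prop :=
  ∀ (a : ℕ → X) (l₀ l₁ : X),
    Filter.Tendsto a Filter.atTop (nhds l₀) →
    Filter.Tendsto a Filter.atTop (nhds l₁) → l₀ = l₁

/-- In a weakly Hausdorff space, singletons are closed. -/
lemma WeaklyHausdorff.isClosed_singleton {X : Type u} [TopologicalSpace X]
    (h : WeaklyHausdorff X) (x : X) : IsClosed ({x} : Set X) := by
  have := h PUnit.{u + 1} (fun _ => x) continuous_const
  rwa [Set.range_const] at this

/-- In a weakly Hausdorff space, the image of a compact Hausdorff space is Hausdorff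
in the subspace topology. -/
lemma WeaklyHausdorff.t2_range {X : Type u} [TopologicalSpace X]
    (h : WeaklyHausdorff X) (K : Type u) [TopologicalSpace K] [CompactSpace K] [T2Space K]
    (g : K → X) (hg : Continuous g) : T2Space (Set.range g) := by
  constructor
  intro x y hxy
  -- the fibers over x and y are closed, disjoint
  have hfx : IsClosed (g ⁻¹' {x.val}) := (h.isClosed_singleton x.val).preimage hg
  have hfy : IsClosed (g ⁻¹' {y.val}) := (h.isClosed_singleton y.val).preimage hg
  have hdisj : Disjoint (g ⁻¹' {x.val}) (g ⁻¹' {y.val}) := by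
    rw [Set.disjoint_left]
    intro k hk hk'
    exact hxy (Subtype.ext (by simp_all))
  obtain ⟨U, V, hU, hV, hxU, hyV, hUV⟩ := normal_separation hfx hfy hdisj
  -- images of the complements are closed
  have hUc : IsCompact Uᶜ := hU.isClosed_compl.isCompact
  have hVc : IsCompact Vᶜ := hV.isClosed_compl.isCompact
  have himg : ∀ S : Set K, IsCompact S → IsClosed (g '' S) := by
    intro S hS
    haveI : CompactSpace S := isCompact_iff_compactSpace.mp hS
    have : g '' S = Set.range (g ∘ (Subtype.val : S → K)) := by
      rw [Set.range_comp, Subtype.range_coe]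
    rw [this]
    exact h S (g ∘ Subtype.val) (hg.comp continuous_subtype_val)
  have hWx : IsOpen (g '' Uᶜ)ᶜ := (himg _ hUc).isOpen_compl
  have hWy : IsOpen (g '' Vᶜ)ᶜ := (himg _ hVc).isOpen_compl
  refine ⟨Subtype.val ⁻¹' (g '' Uᶜ)ᶜ, Subtype.val ⁻¹' (g '' Vᶜ)ᶜ,
    hWx.preimage continuous_subtype_val, hWy.preimage continuous_subtype_val, ?_, ?_, ?_⟩
  · -- x ∉ g '' Uᶜ
    intro hmem
    obtain ⟨k, hk, hk'⟩ := hmem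
    exact hk (hxU (by simp [hk']))
  · intro hmem
    obtain ⟨k, hk, hk'⟩ := hmem
    exact hk (hyV (by simp [hk']))
  · rw [Set.disjoint_left]
    rintro ⟨z, k, rfl⟩ hz1 hz2
    have hkU : k ∈ U := by
      by_contra hk
      exact hz1 ⟨k, hk, rfl⟩
    have hkV : k ∈ V := by
      by_contra hk
      exact hz2 ⟨k, hk, rfl⟩
    exact Set.disjoint_left.mp hUV hkU hkV

/-- Every weakly Hausdorff space is k₂-Hausdorff. -/
theorem weaklyHausdorff_implies_k2Hausdorff (X : Type u) [TopologicalSpace X]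
    (h : WeaklyHausdorff X) : K2Hausdorff X := by
  intro K _ _ _ f hf
  set p : K → X := fun k => (f k).1 with hp
  set q : K → X := fun k => (f k).2 with hq
  have hpc : Continuous p := (continuous_fst.comp hf)
  have hqc : Continuous q := (continuous_snd.comp hf)
  set g : K ⊕ K → X := Sum.elim p q with hg
  have hgc : Continuous g := hpc.sumElim hqc
  haveI : T2Space (Set.range g) := h.t2_range (K ⊕ K) g hgc
  have hpr : ∀ k, p k ∈ Set.range g := fun k => ⟨Sum.inl k, rfl⟩
  have hqr : ∀ k, q k ∈ Set.range g := fun k => ⟨Sum.inr k, rfl⟩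
  set p' : K → Set.range g := fun k => ⟨p k, hpr k⟩ with hp'
  set q' : K → Set.range g := fun k => ⟨q k, hqr k⟩ with hq'
  have hpc' : Continuous p' := hpc.subtype_mk _
  have hqc' : Continuous q' := hqc.subtype_mk _
  have : f ⁻¹' {pr : X × X | pr.1 = pr.2} = {k | p' k = q' k} := by
    ext k
    simp [Subtype.ext_iff, hp', hq', hp, hq]
  rw [this]
  exact isClosed_eq hpc' hqc'
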